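/- arXiv:2412.08114 — 2 statements merged into one kernel-verified Lean document; each statement's English description precedes it below -/
import Mathlib

section
/- Let f = g + h where g : ℝⁿ → ℝ is convex and differentiable with L-Lipschitz gradient (L > 0) and h : ℝⁿ → ℝ is convex. If x⁺ = prox_{αh}(x − α ∇g(x)) with fixed step size α ≤ 1/L, then f(x⁺) ≤ f(x*) + (1/(2α))(‖x − x*‖² − ‖x⁺ − x*‖²) for any x*. -/
open scoped NNReal

open scoped NNReal RealInnerProductSpace
open Set

variable {E : Type*} [NormedAddCommGroup E] [InnerProductSpace ℝ E] [CompleteSpace E]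

lemma line_hasDerivAt {g : E → ℝ} {gradG : E → E}
    (hgrad : ∀ x, HasGradientAt g (gradG x) x) (x v : E) (t : ℝ) :
    HasDerivAt (fun s : ℝ => g (x + s • v)) ⟪gradG (x + t • v), v⟫ t := by
  have h1 : HasDerivAt (fun s : ℝ => x + s • v) v t := by
    simpa using ((hasDerivAt_id t).smul_const v).const_add x
  have h2 := (hgrad (x + t • v)).hasFDerivAt.comp_hasDerivAt t h1
  simpa [InnerProductSpace.toDual_apply_apply, Function.comp_def] using h2

lemma grad_convex_ineq {g : E → ℝ} {gradG : E → E}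
    (hconv : ConvexOn ℝ Set.univ g)
    (hgrad : ∀ x, HasGradientAt g (gradG x) x) (x y : E) :
    g x + ⟪gradG x, y - x⟫ ≤ g y := by
  set φ : ℝ → ℝ := fun s => g (x + s • (y - x)) with hφ
  have hder : HasDerivAt φ ⟪gradG x, y - x⟫ 0 := by
    simpa using line_hasDerivAt hgrad x (y - x) 0
  have hslope : Filter.Tendsto (slope φ 0) (nhdsWithin 0 (Ioi 0)) (nhds ⟪gradG x, y - x⟫) :=
    (hasDerivAt_iff_tendsto_slope.mp hder).mono_left
      (nhdsWithin_mono 0 (fun t ht => ne_of_gt ht))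
  have hub : ∀ᶠ t in nhdsWithin 0 (Ioi 0), slope φ 0 t ≤ g y - g x := by
    filter_upwards [Ioo_mem_nhdsGT_of_mem (by norm_num : (0:ℝ) ∈ Ico 0 1)] with t ht
    have hcv := hconv.2 (mem_univ x) (mem_univ y) (by linarith [ht.2] : (0:ℝ) ≤ 1 - t)
      ht.1.le (by ring)
    have hxy : (1 - t) • x + t • y = x + t • (y - x) := by
      module
    rw [hxy] at hcv
    have : φ t ≤ (1 - t) * g x + t * g y := by simpa [hφ] using hcv
    have hφ0 : φ 0 = g x := by simp [hφ]
    rw [slope_def_field, sub_zero, div_le_iff₀ ht.1, hφ0]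
    nlinarith [ht.1]
  have := le_of_tendsto hslope hub
  linarith

lemma descent_lemma {g : E → ℝ} {gradG : E → E}
    (hgrad : ∀ x, HasGradientAt g (gradG x) x)
    {L : ℝ≥0} (hlip : LipschitzWith L gradG) (x y : E) :
    g y ≤ g x + ⟪gradG x, y - x⟫ + ((L : ℝ) / 2) * ‖y - x‖ ^ 2 := by
  set v := y - x with hv
  set φ : ℝ → ℝ := fun t => g (x + t • v) - t * ⟪gradG x, v⟫ - ((L : ℝ) / 2) * t ^ 2 * ‖v‖ ^ 2
    with hφ
  have hder : ∀ t : ℝ, HasDerivAt φ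
      (⟪gradG (x + t • v), v⟫ - ⟪gradG x, v⟫ - (L : ℝ) * t * ‖v‖ ^ 2) t := by
    intro t
    have h1 := line_hasDerivAt hgrad x v t
    have h2 : HasDerivAt (fun t : ℝ => t * ⟪gradG x, v⟫) ⟪gradG x, v⟫ t := by
      simpa using (hasDerivAt_id t).mul_const ⟪gradG x, v⟫
    have h3 : HasDerivAt (fun t : ℝ => ((L : ℝ) / 2) * t ^ 2 * ‖v‖ ^ 2)
        ((L : ℝ) * t * ‖v‖ ^ 2) t := by
      have := ((hasDerivAt_pow 2 t).const_mul ((L : ℝ) / 2)).mul_const (‖v‖ ^ 2)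
      exact this.congr_deriv (by ring)
    exact (h1.sub h2).sub h3
  have hmono : AntitoneOn φ (Icc 0 1) := by
    apply antitoneOn_of_deriv_nonpos (convex_Icc 0 1)
    · exact (Differentiable.continuous (fun t => (hder t).differentiableAt)).continuousOn
    · intro t ht
      exact (hder t).differentiableAt.differentiableWithinAt
    · intro t ht
      rw [interior_Icc] at ht
      rw [(hder t).deriv]
      have hbd : ⟪gradG (x + t • v) - gradG x, v⟫ ≤ (L : ℝ) * t * ‖v‖ ^ 2 := by
        calc ⟪gradG (x + t • v) - gradG x, v⟫ ≤ ‖gradG (x + t • v) - gradG x‖ * ‖v‖ :=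
              real_inner_le_norm _ _
          _ ≤ ((L : ℝ) * ‖(x + t • v) - x‖) * ‖v‖ := by
              apply mul_le_mul_of_nonneg_right _ (norm_nonneg v)
              have := hlip.dist_le_mul (x + t • v) x
              simpa [dist_eq_norm] using this
          _ = (L : ℝ) * t * ‖v‖ ^ 2 := by
              simp [norm_smul, abs_of_pos ht.1]; ring
      rw [inner_sub_left] at hbd
      linarith
  have := hmono (by norm_num : (0:ℝ) ∈ Icc 0 1) (by norm_num : (1:ℝ) ∈ Icc 0 1) zero_le_one
  have hφ0 : φ 0 = g x := by simp [hφ]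
  have hφ1 : φ 1 = g y - ⟪gradG x, v⟫ - ((L : ℝ) / 2) * ‖v‖ ^ 2 := by
    simp [hφ, hv]
  rw [hφ0, hφ1] at this
  linarith

lemma norm_combo_sq (a b : E) (t : ℝ) :
    ‖(1 - t) • a + t • b‖ ^ 2
      = (1 - t) * ‖a‖ ^ 2 + t * ‖b‖ ^ 2 - t * (1 - t) * ‖a - b‖ ^ 2 := by
  have h1 : (1 - t) • a + t • b = a + t • (b - a) := by module
  have e1 : ‖a + t • (b - a)‖ ^ 2
      = ‖a‖ ^ 2 + 2 * (t * ⟪a, b - a⟫) + t ^ 2 * ‖b - a‖ ^ 2 := by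
    rw [norm_add_sq_real, real_inner_smul_right, norm_smul, mul_pow, Real.norm_eq_abs, sq_abs]
  have e2 : ⟪a, b - a⟫ = ⟪a, b⟫ - ‖a‖ ^ 2 := by
    rw [inner_sub_right, real_inner_self_eq_norm_sq]
  have e3 : ‖b - a‖ ^ 2 = ‖a - b‖ ^ 2 := by rw [norm_sub_rev]
  have e4 : ‖a - b‖ ^ 2 = ‖a‖ ^ 2 - 2 * ⟪a, b⟫ + ‖b‖ ^ 2 := norm_sub_sq_real a b
  rw [h1, e1, e2, e3, e4]; ring


lemma prox_strong {h : E → ℝ} (hhconv : ConvexOn ℝ Set.univ h)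
    {β : ℝ} (hβ : 0 < β) {y xplus : E}
    (hprox : ∀ z, β * ‖xplus - y‖ ^ 2 + h xplus ≤ β * ‖z - y‖ ^ 2 + h z) (z : E) :
    β * ‖xplus - y‖ ^ 2 + h xplus + β * ‖z - xplus‖ ^ 2 ≤ β * ‖z - y‖ ^ 2 + h z := by
  set c := ‖z - xplus‖ ^ 2 with hc
  have hc0 : 0 ≤ c := sq_nonneg _
  have key : ∀ t : ℝ, t ∈ Set.Ioo (0:ℝ) 1 →
      β * ‖xplus - y‖ ^ 2 + h xplus + (1 - t) * (β * c) ≤ β * ‖z - y‖ ^ 2 + h z := by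
    intro t ht
    have hw := hprox ((1 - t) • xplus + t • z)
    have hcomb : ((1 - t) • xplus + t • z) - y = (1 - t) • (xplus - y) + t • (z - y) := by
      module
    have hsub : (xplus - y) - (z - y) = xplus - z := by module
    have hnorm : ‖((1 - t) • xplus + t • z) - y‖ ^ 2
        = (1 - t) * ‖xplus - y‖ ^ 2 + t * ‖z - y‖ ^ 2 - t * (1 - t) * c := by
      rw [hcomb, norm_combo_sq, hsub, norm_sub_rev xplus z, ← hc]
    have hh : h ((1 - t) • xplus + t • z) ≤ (1 - t) * h xplus + t * h z := by
      simpa using hhconv.2 (Set.mem_univ xplus) (Set.mem_univ z)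
        (by linarith [ht.2] : (0:ℝ) ≤ 1 - t) ht.1.le (by ring)
    rw [hnorm] at hw
    have h2 : β * ‖xplus - y‖ ^ 2 + h xplus ≤
        (1 - t) * (β * ‖xplus - y‖ ^ 2 + h xplus) + t * (β * ‖z - y‖ ^ 2 + h z)
          - t * (1 - t) * (β * c) := by nlinarith [hw, hh]
    nlinarith [h2, ht.1, ht.2]
  refine le_of_forall_pos_le_add ?_
  intro ε hε
  have hD0 : 0 ≤ β * c := mul_nonneg hβ.le hc0
  set t : ℝ := min (1/2) (ε / (β * c + 1)) with htdef
  have ht1 : 0 < t := lt_min (by norm_num) (by positivity)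
  have ht2 : t < 1 := lt_of_le_of_lt (min_le_left _ _) (by norm_num)
  have hk := key t ⟨ht1, ht2⟩
  have hle : t * (β * c) ≤ ε := by
    have h1 : t ≤ ε / (β * c + 1) := min_le_right _ _
    calc t * (β * c) ≤ (ε / (β * c + 1)) * (β * c) :=
          mul_le_mul_of_nonneg_right h1 hD0
      _ ≤ ε := by
          rw [div_mul_eq_mul_div, div_le_iff₀ (by positivity)]
          nlinarith [hD0, hε]
  have hsplit : β * c = (1 - t) * (β * c) + t * (β * c) := by ring
  linarith [hk, hle]

theorem prox_grad_one_step {n : ℕ}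
    (g h : EuclideanSpace ℝ (Fin n) → ℝ)
    (gradG : EuclideanSpace ℝ (Fin n) → EuclideanSpace ℝ (Fin n))
    (hgconv : ConvexOn ℝ Set.univ g)
    (hhconv : ConvexOn ℝ Set.univ h)
    (hgrad : ∀ x, HasGradientAt g (gradG x) x)
    (L : ℝ≥0) (hL : 0 < L) (hlip : LipschitzWith L gradG)
    (α : ℝ) (hα : 0 < α) (hαL : α ≤ 1 / (L : ℝ))
    (x xplus : EuclideanSpace ℝ (Fin n))
    (hprox : ∀ z, (1 / (2 * α)) * ‖xplus - (x - α • gradG x)‖ ^ 2 + h xplus ≤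
      (1 / (2 * α)) * ‖z - (x - α • gradG x)‖ ^ 2 + h z) :
    ∀ xstar, g xplus + h xplus ≤ g xstar + h xstar +
      (1 / (2 * α)) * (‖x - xstar‖ ^ 2 - ‖xplus - xstar‖ ^ 2) := by
  intro xstar
  have hβ : (0:ℝ) < 1 / (2 * α) := by positivity
  have h2α : (0:ℝ) < 2 * α := by linarith
  have hstrong := prox_strong hhconv hβ hprox xstar
  have expand : ∀ w : EuclideanSpace ℝ (Fin n),
      ‖w - (x - α • gradG x)‖ ^ 2
        = ‖w - x‖ ^ 2 + 2 * α * ⟪gradG x, w - x⟫ + α ^ 2 * ‖gradG x‖ ^ 2 := by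
    intro w
    have h1 : w - (x - α • gradG x) = (w - x) + α • gradG x := by module
    rw [h1, norm_add_sq_real, real_inner_smul_right, norm_smul, mul_pow,
      Real.norm_eq_abs, sq_abs, real_inner_comm]
    ring
  rw [expand xplus, expand xstar] at hstrong
  have hdesc := descent_lemma hgrad hlip x xplus
  have hconvg := grad_convex_ineq hgconv hgrad x xstar
  have hαL' : α * (L : ℝ) ≤ 1 := by
    have hLpos : (0:ℝ) < (L : ℝ) := by exact_mod_cast hL
    have := mul_le_mul_of_nonneg_right hαL hLpos.le
    rwa [one_div, inv_mul_cancel₀ hLpos.ne'] at this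
  -- scaled versions
  have hN1 : (0:ℝ) ≤ ‖xplus - x‖ ^ 2 := sq_nonneg _
  have hdesc2 : 2 * α * g xplus ≤ 2 * α * g x + 2 * α * ⟪gradG x, xplus - x⟫
      + ‖xplus - x‖ ^ 2 := by
    nlinarith [mul_le_mul_of_nonneg_left hdesc h2α.le,
      mul_le_mul_of_nonneg_right hαL' hN1]
  have hconv2 : 2 * α * g x + 2 * α * ⟪gradG x, xstar - x⟫ ≤ 2 * α * g xstar := by
    nlinarith [mul_le_mul_of_nonneg_left hconvg h2α.le]
  have hstrong2 : ‖xplus - x‖ ^ 2 + 2 * α * ⟪gradG x, xplus - x⟫ + 2 * α * h xplus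
      + ‖xstar - xplus‖ ^ 2
      ≤ ‖xstar - x‖ ^ 2 + 2 * α * ⟪gradG x, xstar - x⟫ + 2 * α * h xstar := by
    have hne : α ≠ 0 := hα.ne'
    have lhs_eq : 1 / (2 * α) * (‖xplus - x‖ ^ 2 + 2 * α * ⟪gradG x, xplus - x⟫
          + α ^ 2 * ‖gradG x‖ ^ 2) + h xplus + 1 / (2 * α) * ‖xstar - xplus‖ ^ 2
        = (‖xplus - x‖ ^ 2 + 2 * α * ⟪gradG x, xplus - x⟫ + α ^ 2 * ‖gradG x‖ ^ 2
          + 2 * α * h xplus + ‖xstar - xplus‖ ^ 2) / (2 * α) := by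
      field_simp
    have rhs_eq : 1 / (2 * α) * (‖xstar - x‖ ^ 2 + 2 * α * ⟪gradG x, xstar - x⟫
          + α ^ 2 * ‖gradG x‖ ^ 2) + h xstar
        = (‖xstar - x‖ ^ 2 + 2 * α * ⟪gradG x, xstar - x⟫ + α ^ 2 * ‖gradG x‖ ^ 2
          + 2 * α * h xstar) / (2 * α) := by
      field_simp
    rw [lhs_eq, rhs_eq, div_le_div_iff₀ h2α h2α] at hstrong
    have := (mul_le_mul_iff_of_pos_right h2α).mp hstrong
    linarith [this]
  -- finish
  have key2 : 2 * α * (g xplus + h xplus) + ‖xstar - xplus‖ ^ 2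
      ≤ 2 * α * (g xstar + h xstar) + ‖xstar - x‖ ^ 2 := by linarith
  rw [norm_sub_rev x xstar, norm_sub_rev xplus xstar, ← sub_nonneg]
  have hrw : g xstar + h xstar
        + 1 / (2 * α) * (‖xstar - x‖ ^ 2 - ‖xstar - xplus‖ ^ 2) - (g xplus + h xplus)
      = 1 / (2 * α) * ((2 * α * (g xstar + h xstar) + ‖xstar - x‖ ^ 2)
        - (2 * α * (g xplus + h xplus) + ‖xstar - xplus‖ ^ 2)) := by
    field_simp; ring
  rw [hrw]
  exact mul_nonneg hβ.le (by linarith)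
end

section
/- Let f = g + h with g convex differentiable having L-Lipschitz gradient and h convex, and let x* be a minimizer of f. Proximal gradient descent with fixed step size α ≤ 1/L, i.e., x_{i+1} = prox_{αh}(x_i − α∇g(x_i)), satisfies f(x_i) − f(x*) ≤ ‖x_0 − x*‖² / (2αi) for every i ≥ 1; in particular the method converges at rate O(1/i). -/
open scoped NNReal RealInnerProductSpace

variable {E : Type*} [NormedAddCommGroup E] [InnerProductSpace ℝ E] [CompleteSpace E]

/-- derivative of `g` along a line -/
lemma pg_hasDerivAt_line (g : E → ℝ) (G : E) (x v : E) (t : ℝ)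
    (hg : HasGradientAt g G (x + t • v)) :
    HasDerivAt (fun s : ℝ => g (x + s • v)) (⟪G, v⟫) t := by
  have h1 : HasDerivAt (fun s : ℝ => x + s • v) v t := by
    simpa using ((hasDerivAt_id t).smul_const v).const_add x
  have h2 := hg.hasFDerivAt.comp_hasDerivAt t h1
  simp [InnerProductSpace.toDual_apply_apply] at h2
  exact h2

/-- gradient inequality for convex functions -/
lemma pg_convex_grad (g : E → ℝ) (gradG : E → E)
    (hconv : ConvexOn ℝ Set.univ g) (hgrad : ∀ x, HasGradientAt g (gradG x) x)
    (x z : E) : g x + ⟪gradG x, z - x⟫ ≤ g z := by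
  set φ : ℝ → ℝ := fun s => g (x + s • (z - x)) with hφ
  have hconvφ : ConvexOn ℝ Set.univ φ := by
    have := hconv.comp_affineMap (AffineMap.lineMap x z : ℝ →ᵃ[ℝ] E)
    simpa [Function.comp_def, AffineMap.lineMap_apply, hφ, add_comm, Set.preimage_univ]
      using this
  have hd : HasDerivAt φ (⟪gradG x, z - x⟫) 0 := by
    have := pg_hasDerivAt_line g (gradG x) x (z - x) 0 (by simpa using hgrad x)
    simpa [hφ] using this
  have := hconvφ.le_slope_of_hasDerivAt (Set.mem_univ 0) (Set.mem_univ 1) one_pos hd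
  have hs : slope φ 0 1 = g z - g x := by
    simp [slope_def_field, hφ]
  rw [hs] at this
  linarith

/-- descent lemma -/
lemma pg_descent (g : E → ℝ) (gradG : E → E)
    (hgrad : ∀ x, HasGradientAt g (gradG x) x)
    (L : ℝ≥0) (hlip : LipschitzWith L gradG)
    (x y : E) : g y ≤ g x + ⟪gradG x, y - x⟫ + (L : ℝ) / 2 * ‖y - x‖ ^ 2 := by
  set v := y - x with hv
  set ψ : ℝ → ℝ := fun t => g (x + t • v) - t * ⟪gradG x, v⟫ - (L : ℝ) / 2 * t ^ 2 * ‖v‖ ^ 2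
    with hψ
  have hdψ : ∀ t : ℝ, HasDerivAt ψ
      (⟪gradG (x + t • v), v⟫ - ⟪gradG x, v⟫ - (L : ℝ) * t * ‖v‖ ^ 2) t := by
    intro t
    have h1 := pg_hasDerivAt_line g (gradG (x + t • v)) x v t (hgrad _)
    have h2 : HasDerivAt (fun t : ℝ => t * ⟪gradG x, v⟫) (⟪gradG x, v⟫) t := by
      simpa using (hasDerivAt_id t).mul_const (⟪gradG x, v⟫)
    have h3 : HasDerivAt (fun t : ℝ => (L : ℝ) / 2 * t ^ 2 * ‖v‖ ^ 2)
        ((L : ℝ) * t * ‖v‖ ^ 2) t := by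
      have := ((hasDerivAt_pow 2 t).const_mul ((L : ℝ) / 2)).mul_const (‖v‖ ^ 2)
      exact this.congr_deriv (by push_cast; ring)
    exact (h1.sub h2).sub h3
  have hmono : AntitoneOn ψ (Set.Icc (0 : ℝ) 1) := by
    apply antitoneOn_of_deriv_nonpos (convex_Icc 0 1)
    · exact fun t _ => ((hdψ t).continuousAt).continuousWithinAt
    · exact fun t _ => ((hdψ t).differentiableAt).differentiableWithinAt
    · intro t ht
      rw [(hdψ t).deriv]
      rw [interior_Icc] at ht
      have hcs : ⟪gradG (x + t • v) - gradG x, v⟫ ≤ ‖gradG (x + t • v) - gradG x‖ * ‖v‖ :=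
        real_inner_le_norm _ _
      have hlipb : ‖gradG (x + t • v) - gradG x‖ ≤ (L : ℝ) * ‖t • v‖ := by
        simpa [dist_eq_norm] using hlip.dist_le_mul (x + t • v) x
      have hnorm : ‖t • v‖ = t * ‖v‖ := by
        rw [norm_smul, Real.norm_eq_abs, abs_of_pos ht.1]
      have := hcs.trans (mul_le_mul_of_nonneg_right (hlipb.trans_eq (by rw [hnorm]))
        (norm_nonneg v))
      rw [inner_sub_left] at this
      nlinarith [norm_nonneg v, ht.1.le]
  have h01 := hmono (Set.left_mem_Icc.2 zero_le_one) (Set.right_mem_Icc.2 zero_le_one)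
    zero_le_one
  simp only [hψ, zero_smul, add_zero, one_smul, zero_mul, zero_pow, mul_zero, sub_zero,
    one_pow, mul_one, one_mul] at h01
  have : x + v = y := by rw [hv]; abel
  rw [this] at h01
  linarith

/-- subgradient inequality from the prox minimization property -/
lemma pg_prox_subgrad (h : E → ℝ) (hhconv : ConvexOn ℝ Set.univ h) (α : ℝ) (hα : 0 < α)
    (y p : E)
    (hp : ∀ z, (1 / (2 * α)) * ‖p - y‖ ^ 2 + h p ≤ (1 / (2 * α)) * ‖z - y‖ ^ 2 + h z)
    (z : E) : h p ≤ h z + (1 / α) * ⟪p - y, z - p⟫ := by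
  set c : ℝ := ⟪p - y, z - p⟫ with hc
  set d : ℝ := ‖z - p‖ ^ 2 with hd
  set β : ℝ := 1 / (2 * α) with hβ
  have hβpos : 0 < β := by
    rw [hβ]; positivity
  have key : ∀ t ∈ Set.Ioc (0 : ℝ) 1,
      0 ≤ 2 * β * c + (h z - h p) + t * (β * d) := by
    intro t ht
    have hzt := hp ((1 - t) • p + t • z)
    have hch : h ((1 - t) • p + t • z) ≤ (1 - t) * h p + t * h z :=
      hhconv.2 (Set.mem_univ p) (Set.mem_univ z)
        (by linarith [ht.2] : (0:ℝ) ≤ 1 - t) ht.1.le (by ring)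
    have hnorm : ‖(1 - t) • p + t • z - y‖ ^ 2 = ‖p - y‖ ^ 2 + 2 * t * c + t ^ 2 * d := by
      have h2 : (1 - t) • p + t • z - y = (p - y) + t • (z - p) := by
        rw [sub_smul, smul_sub, one_smul]; abel
      rw [h2, norm_add_sq_real, real_inner_smul_right, norm_smul, Real.norm_eq_abs,
        abs_of_pos ht.1, mul_pow]
      ring
    rw [hnorm] at hzt
    have hmul : 0 ≤ t * (2 * β * c + (h z - h p) + t * (β * d)) := by nlinarith
    exact nonneg_of_mul_nonneg_right hmul ht.1
  have tend : Filter.Tendsto (fun t : ℝ => 2 * β * c + (h z - h p) + t * (β * d))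
      (nhdsWithin 0 (Set.Ioi 0)) (nhds (2 * β * c + (h z - h p))) := by
    have hcont : Continuous (fun t : ℝ => 2 * β * c + (h z - h p) + t * (β * d)) := by
      continuity
    have := (hcont.tendsto 0).mono_left (nhdsWithin_le_nhds (s := Set.Ioi 0))
    simpa using this
  have hev : ∀ᶠ t in nhdsWithin (0:ℝ) (Set.Ioi 0),
      0 ≤ 2 * β * c + (h z - h p) + t * (β * d) :=
    Filter.eventually_of_mem (Ioc_mem_nhdsGT_of_mem ⟨le_refl 0, zero_lt_one⟩) key
  have hlim : 0 ≤ 2 * β * c + (h z - h p) := ge_of_tendsto tend hev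
  have hββ : 2 * β = 1 / α := by
    rw [hβ]; field_simp
  rw [hββ] at hlim
  linarith

/-- one-step inequality for proximal gradient descent -/
lemma pg_onestep (g h : E → ℝ) (gradG : E → E)
    (hgconv : ConvexOn ℝ Set.univ g) (hhconv : ConvexOn ℝ Set.univ h)
    (hgrad : ∀ x, HasGradientAt g (gradG x) x)
    (L : ℝ≥0) (hL : 0 < L) (hlip : LipschitzWith L gradG)
    (α : ℝ) (hα : 0 < α) (hαL : α ≤ 1 / (L : ℝ))
    (w p : E)
    (hp : ∀ z, (1 / (2 * α)) * ‖p - (w - α • gradG w)‖ ^ 2 + h p ≤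
        (1 / (2 * α)) * ‖z - (w - α • gradG w)‖ ^ 2 + h z)
    (z : E) :
    g p + h p ≤ g z + h z + (1 / (2 * α)) * (‖w - z‖ ^ 2 - ‖p - z‖ ^ 2) := by
  set G := gradG w with hG
  set a := p - w with ha
  have hLα : (L : ℝ) ≤ 1 / α := by
    rw [le_div_iff₀ hα]
    have hLpos : (0:ℝ) < L := hL
    have := (le_div_iff₀ hLpos).1 hαL
    linarith [this]
  -- descent lemma
  have d1 : g p ≤ g w + ⟪G, a⟫ + (L : ℝ) / 2 * ‖a‖ ^ 2 := by
    have := pg_descent g gradG hgrad L hlip w p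
    simpa [ha, hG] using this
  have d1' : g p ≤ g w + ⟪G, a⟫ + (1 / (2 * α)) * ‖a‖ ^ 2 := by
    have hsq : (0:ℝ) ≤ ‖a‖ ^ 2 := sq_nonneg _
    have h12 : (L:ℝ) / 2 ≤ 1 / (2 * α) := by
      have : (1:ℝ) / (2 * α) = (1 / α) / 2 := by ring
      rw [this]; linarith
    nlinarith [mul_le_mul_of_nonneg_right h12 hsq]
  -- convexity of g
  have d2 : g w ≤ g z + ⟪G, w - z⟫ := by
    have := pg_convex_grad g gradG hgconv hgrad w z
    have hinner : ⟪G, z - w⟫ = -⟪G, w - z⟫ := by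
      rw [← inner_neg_right]; congr 1; abel
    rw [hinner] at this
    linarith
  -- prox subgradient
  have d3 : h p ≤ h z + (1 / α) * ⟪p - (w - α • G), z - p⟫ :=
    pg_prox_subgrad h hhconv α hα _ p hp z
  have e2 : ⟪p - (w - α • G), z - p⟫ = ⟪a, z - p⟫ + α * ⟪G, z - p⟫ := by
    have : p - (w - α • G) = a + α • G := by rw [ha]; abel
    rw [this, inner_add_left, real_inner_smul_left]
  rw [e2] at d3
  have e4 : (1 / α) * (⟪a, z - p⟫ + α * ⟪G, z - p⟫) = (1 / α) * ⟪a, z - p⟫ + ⟪G, z - p⟫ := by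
    field_simp
  rw [e4] at d3
  -- gradient terms cancel
  have e1 : ⟪G, a⟫ + ⟪G, w - z⟫ + ⟪G, z - p⟫ = 0 := by
    rw [← inner_add_right, ← inner_add_right]
    have : a + (w - z) + (z - p) = 0 := by rw [ha]; abel
    rw [this, inner_zero_right]
  -- norm identity
  have e3 : ‖w - z‖ ^ 2 = ‖a‖ ^ 2 + 2 * ⟪a, z - p⟫ + ‖p - z‖ ^ 2 := by
    rw [norm_sub_rev w z, show z - w = a + (z - p) by rw [ha]; abel, norm_add_sq_real,
      norm_sub_rev p z]
  have hα' : (0:ℝ) < 1 / α := by positivity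
  have hhalf : (1 : ℝ) / α = 2 * (1 / (2 * α)) := by field_simp
  have expand : (1 / α) * ⟪a, z - p⟫ =
      (1 / (2 * α)) * (‖w - z‖ ^ 2 - ‖p - z‖ ^ 2) - (1 / (2 * α)) * ‖a‖ ^ 2 := by
    rw [e3, hhalf]; ring
  linarith [d1', d2, d3, e1, expand]

theorem prox_grad_convergence_rate {n : ℕ}
    (g h : EuclideanSpace ℝ (Fin n) → ℝ)
    (gradG : EuclideanSpace ℝ (Fin n) → EuclideanSpace ℝ (Fin n))
    (hgconv : ConvexOn ℝ Set.univ g)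
    (hhconv : ConvexOn ℝ Set.univ h)
    (hgrad : ∀ x, HasGradientAt g (gradG x) x)
    (L : ℝ≥0) (hL : 0 < L) (hlip : LipschitzWith L gradG)
    (α : ℝ) (hα : 0 < α) (hαL : α ≤ 1 / (L : ℝ))
    (xstar : EuclideanSpace ℝ (Fin n))
    (hmin : ∀ z, g xstar + h xstar ≤ g z + h z)
    (x : ℕ → EuclideanSpace ℝ (Fin n))
    (hseq : ∀ i, ∀ z,
      (1 / (2 * α)) * ‖x (i + 1) - (x i - α • gradG (x i))‖ ^ 2 + h (x (i + 1)) ≤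
        (1 / (2 * α)) * ‖z - (x i - α • gradG (x i))‖ ^ 2 + h z) :
    ∀ i : ℕ, 1 ≤ i →
      g (x i) + h (x i) - (g xstar + h xstar) ≤ ‖x 0 - xstar‖ ^ 2 / (2 * α * i) := by
  set F : ℕ → ℝ := fun k => g (x k) + h (x k) with hF
  set D : ℕ → ℝ := fun k => ‖x k - xstar‖ ^ 2 with hD
  set fstar : ℝ := g xstar + h xstar with hfstar
  have hF0 : ∀ k, F k = g (x k) + h (x k) := fun _ => rfl
  have hD0 : ∀ k, D k = ‖x k - xstar‖ ^ 2 := fun _ => rfl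
  have step : ∀ k z, F (k + 1) ≤ g z + h z +
      (1 / (2 * α)) * (‖x k - z‖ ^ 2 - ‖x (k + 1) - z‖ ^ 2) :=
    fun k z => pg_onestep g h gradG hgconv hhconv hgrad L hL hlip α hα hαL
      (x k) (x (k + 1)) (hseq k) z
  have h2α : (0:ℝ) < 1 / (2 * α) := by positivity
  clear_value F D fstar
  have mono : ∀ k, F (k + 1) ≤ F k := by
    intro k
    have hst := step k (x k)
    simp only [sub_self, norm_zero] at hst
    have hnn := mul_nonneg h2α.le (sq_nonneg ‖x (k + 1) - x k‖)
    rw [← hF0 k] at hst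
    linarith [hst, hnn]
  have key : ∀ k : ℕ, (k : ℝ) * (F k - fstar) ≤ (1 / (2 * α)) * (D 0 - D k) := by
    intro k
    induction k with
    | zero => simp
    | succ k ih =>
      have s' := step k xstar
      rw [← hfstar, ← hD0 k, ← hD0 (k + 1)] at s'
      have hm := mul_le_mul_of_nonneg_left (mono k) (Nat.cast_nonneg k : (0:ℝ) ≤ k)
      push_cast
      linarith [hm, ih, s']
  intro i hi
  have hipos : (0:ℝ) < i := by exact_mod_cast hi
  have hDi : 0 ≤ D i := (hD0 i) ▸ sq_nonneg _
  have hk := key i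
  have hb : (i : ℝ) * (F i - fstar) ≤ (1 / (2 * α)) * D 0 := by nlinarith
  have h2αi : (0:ℝ) < 2 * α * i := by positivity
  have hmul := mul_le_mul_of_nonneg_right hb (by positivity : (0:ℝ) ≤ 2 * α)
  have hsimp : 1 / (2 * α) * D 0 * (2 * α) = D 0 := by field_simp
  rw [hsimp] at hmul
  rw [show (‖x 0 - xstar‖ ^ 2 : ℝ) = D 0 from (hD0 0).symm, le_div_iff₀ h2αi,
    show g (x i) + h (x i) = F i from (hF0 i).symm]
  linarith [hmul]
end
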